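/- arXiv:1007.2453 — 4 statements merged into one kernel-verified Lean document; each statement's English description precedes it below -/
import Mathlib

section
/- Let E be a finite set and ν any function assigning to each pair (X,Y) of subsets of E a value ν(X,Y) in a commutative ring, arising from a valuation on tension-flow subgroups Ω_{X,Y^c}. Then the weighted sum ∑_{Y ⊆ X ⊆ E} u^{|X|} v^{|Y|} ν⁰(X,Y) over pairs, where ν⁰(X,Y) := ∑_{X⊆Z, W⊆Y} (−1)^{|Z−X|+|Y−W|} ν(Z,W), equals ∑_{W ⊆ Z ⊆ E} (uv)^{|W|} (u − uv − 1)^{|Z−W|} (−1)^{|Z|+|W|}·(−1)^{|Z|+|W|} ν(Z,W); equivalently, ∬_{supp f ⊆ ker g} u^{|ker f|} v^{|supp g|} dν(f,g) = ∑_{Y⊆X⊆E} (uv)^{|Y|} (u−uv−1)^{|X−Y|} ν(Ω_{X,Y^c}). -/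
open Finset

section Aux

variable {E R : Type} [Fintype E] [DecidableEq E] [CommRing R]

lemma aux_lemA (S : Finset E) (a b : R) :
    ∑ T ∈ S.powerset, a ^ T.card * b ^ (S \ T).card = (a + b) ^ S.card := by
  have := Finset.prod_add (fun _ : E => a) (fun _ : E => b) S
  simp only [Finset.prod_const] at this
  exact this.symm

lemma aux_lemD (W Z : Finset E) (hWZ : W ⊆ Z) (f : Finset E → R) :
    ∑ X ∈ univ, (if X ⊆ Z ∧ W ⊆ X then f X else 0)
      = ∑ X ∈ (Z \ W).powerset, f (X ∪ W) := by
  rw [Finset.sum_ite, Finset.sum_const_zero, add_zero]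
  apply Finset.sum_nbij' (fun X => X \ W) (fun X => X ∪ W)
  · intro a ha
    simp only [Finset.mem_filter, Finset.mem_univ, true_and] at ha
    simp only [Finset.mem_powerset]
    exact Finset.sdiff_subset_sdiff ha.1 (subset_refl W)
  · intro a ha
    simp only [Finset.mem_powerset] at ha
    simp only [Finset.mem_filter, Finset.mem_univ, true_and]
    constructor
    · exact Finset.union_subset (ha.trans (Finset.sdiff_subset)) hWZ
    · exact Finset.subset_union_right
  · intro a ha
    simp only [Finset.mem_filter, Finset.mem_univ, true_and] at ha
    exact Finset.sdiff_union_of_subset ha.2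
  · intro a ha
    simp only [Finset.mem_powerset] at ha
    exact Finset.union_sdiff_cancel_right
      (Finset.disjoint_of_subset_left ha Finset.sdiff_disjoint)
  · intro a ha
    simp only [Finset.mem_filter, Finset.mem_univ, true_and] at ha
    rw [Finset.sdiff_union_of_subset ha.2]

lemma aux_sum4 {M : Type*} [AddCommMonoid M] {α β γ δ : Type}
    [Fintype α] [Fintype β] [Fintype γ] [Fintype δ]
    (f : α → β → γ → δ → M) :
    ∑ x : α, ∑ y : β, ∑ z : γ, ∑ w : δ, f x y z w
      = ∑ z : γ, ∑ w : δ, ∑ x : α, ∑ y : β, f x y z w := by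
  calc
    ∑ x : α, ∑ y : β, ∑ z : γ, ∑ w : δ, f x y z w
      = ∑ x : α, ∑ z : γ, ∑ y : β, ∑ w : δ, f x y z w :=
        Finset.sum_congr rfl (fun x _ => Finset.sum_comm)
    _ = ∑ z : γ, ∑ x : α, ∑ y : β, ∑ w : δ, f x y z w := Finset.sum_comm
    _ = ∑ z : γ, ∑ x : α, ∑ w : δ, ∑ y : β, f x y z w :=
        Finset.sum_congr rfl (fun z _ =>
          Finset.sum_congr rfl (fun x _ => Finset.sum_comm))
    _ = ∑ z : γ, ∑ w : δ, ∑ x : α, ∑ y : β, f x y z w :=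
        Finset.sum_congr rfl (fun z _ => Finset.sum_comm)

lemma aux_keyC (v : R) (X W : Finset E) :
    ∑ Y ∈ univ, (if Y ⊆ X ∧ W ⊆ Y then v ^ Y.card * (-1 : R) ^ (Y \ W).card else 0)
      = if W ⊆ X then v ^ W.card * (1 - v) ^ (X \ W).card else 0 := by
  by_cases h : W ⊆ X
  · rw [if_pos h, aux_lemD W X h]
    have : ∀ Y ∈ (X \ W).powerset,
        v ^ (Y ∪ W).card * (-1 : R) ^ ((Y ∪ W) \ W).card
        = v ^ W.card * ((-v) ^ Y.card * (1 : R) ^ ((X \ W) \ Y).card) := by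
      intro Y hY
      simp only [Finset.mem_powerset] at hY
      have hd : Disjoint Y W := Finset.disjoint_of_subset_left hY Finset.sdiff_disjoint
      rw [Finset.union_sdiff_cancel_right hd, Finset.card_union_of_disjoint hd]
      rw [neg_pow, one_pow, pow_add]
      ring
    rw [Finset.sum_congr rfl this, ← Finset.mul_sum, aux_lemA]
    rw [neg_add_eq_sub]
  · rw [if_neg h]
    apply Finset.sum_eq_zero
    intro Y _
    rw [if_neg]
    rintro ⟨h1, h2⟩
    exact h (h2.trans h1)

lemma aux_keyMain (u v : R) (Z W : Finset E) :
    ∑ X ∈ (univ : Finset (Finset E)), ∑ Y ∈ univ,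
        (if Y ⊆ X ∧ X ⊆ Z ∧ W ⊆ Y then
          u ^ X.card * v ^ Y.card * (-1 : R) ^ ((Z \ X).card + (Y \ W).card) else 0)
      = if W ⊆ Z then (u * v) ^ W.card * (u - u * v - 1) ^ (Z \ W).card else 0 := by
  have step1 : ∀ X : Finset E,
      (∑ Y ∈ (univ : Finset (Finset E)),
        (if Y ⊆ X ∧ X ⊆ Z ∧ W ⊆ Y then
          u ^ X.card * v ^ Y.card * (-1 : R) ^ ((Z \ X).card + (Y \ W).card) else 0))
      = if X ⊆ Z ∧ W ⊆ X then
          u ^ X.card * (-1 : R) ^ (Z \ X).card * (v ^ W.card * (1 - v) ^ (X \ W).card)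
        else 0 := by
    intro X
    by_cases hXZ : X ⊆ Z
    · have : ∀ Y ∈ (univ : Finset (Finset E)),
          (if Y ⊆ X ∧ X ⊆ Z ∧ W ⊆ Y then
            u ^ X.card * v ^ Y.card * (-1 : R) ^ ((Z \ X).card + (Y \ W).card) else 0)
          = u ^ X.card * (-1 : R) ^ (Z \ X).card *
              (if Y ⊆ X ∧ W ⊆ Y then v ^ Y.card * (-1 : R) ^ (Y \ W).card else 0) := by
        intro Y _
        by_cases hc : Y ⊆ X ∧ W ⊆ Y
        · rw [if_pos ⟨hc.1, hXZ, hc.2⟩, if_pos hc, pow_add]; ring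
        · rw [if_neg, if_neg hc, mul_zero]
          rintro ⟨h1, _, h3⟩; exact hc ⟨h1, h3⟩
      rw [Finset.sum_congr rfl this, ← Finset.mul_sum, aux_keyC]
      by_cases hWX : W ⊆ X
      · rw [if_pos hWX, if_pos ⟨hXZ, hWX⟩]
      · rw [if_neg hWX, if_neg (by rintro ⟨_, h⟩; exact hWX h), mul_zero]
    · rw [if_neg (by rintro ⟨h, _⟩; exact hXZ h)]
      apply Finset.sum_eq_zero
      intro Y _
      rw [if_neg]
      rintro ⟨_, h2, _⟩; exact hXZ h2
  rw [Finset.sum_congr rfl (fun X _ => step1 X)]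
  by_cases hWZ : W ⊆ Z
  · rw [if_pos hWZ, aux_lemD W Z hWZ]
    have : ∀ X ∈ (Z \ W).powerset,
        u ^ (X ∪ W).card * (-1 : R) ^ (Z \ (X ∪ W)).card *
            (v ^ W.card * (1 - v) ^ ((X ∪ W) \ W).card)
        = (u * v) ^ W.card * ((u * (1 - v)) ^ X.card * (-1 : R) ^ ((Z \ W) \ X).card) := by
      intro X hX
      simp only [Finset.mem_powerset] at hX
      have hd : Disjoint X W := Finset.disjoint_of_subset_left hX Finset.sdiff_disjoint
      have hsd : Z \ (X ∪ W) = (Z \ W) \ X := by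
        ext a; simp only [Finset.mem_sdiff, Finset.mem_union]; tauto
      rw [Finset.union_sdiff_cancel_right hd, Finset.card_union_of_disjoint hd, hsd,
        pow_add, mul_pow, mul_pow]
      ring
    rw [Finset.sum_congr rfl this, ← Finset.mul_sum, aux_lemA]
    congr 1
    congr 1
    ring
  · rw [if_neg hWZ]
    apply Finset.sum_eq_zero
    intro X _
    rw [if_neg]
    rintro ⟨h1, h2⟩; exact hWZ (h2.trans h1)

end Aux

/-- For any valuation values `ν(Z,W)` (with `ν Z W` standing for `ν(Ω_{Z,Wᶜ})`)
and the Möbius-inverted values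
`ν⁰(X,Y) = ∑_{X⊆Z, W⊆Y} (-1)^{|Z∖X|+|Y∖W|} ν(Z,W)`, the weighted sum
`∑_{Y⊆X⊆E} u^{|X|} v^{|Y|} ν⁰(X,Y)` (the integral of
`u^{|ker f|} v^{|supp g|}` over `supp f ⊆ ker g`) equals
`∑_{W⊆Z⊆E} (uv)^{|W|} (u - uv - 1)^{|Z∖W|} ν(Z,W)`. -/
theorem stmt11 {E R : Type} [Fintype E] [DecidableEq E] [CommRing R]
    (u v : R) (ν : Finset E → Finset E → R) :
    ∑ X : Finset E, ∑ Y ∈ X.powerset,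
      u ^ X.card * v ^ Y.card *
        (∑ Z ∈ univ.filter (fun Z => X ⊆ Z), ∑ W ∈ Y.powerset,
          (-1 : R) ^ ((Z \ X).card + (Y \ W).card) * ν Z W)
    = ∑ Z : Finset E, ∑ W ∈ Z.powerset,
        (u * v) ^ W.card * (u - u * v - 1) ^ (Z \ W).card * ν Z W := by
  have hpw : ∀ S : Finset E, S.powerset = univ.filter (fun T => T ⊆ S) := by
    intro S; ext T; simp
  calc
    ∑ X : Finset E, ∑ Y ∈ X.powerset,
      u ^ X.card * v ^ Y.card *
        (∑ Z ∈ univ.filter (fun Z => X ⊆ Z), ∑ W ∈ Y.powerset,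
          (-1 : R) ^ ((Z \ X).card + (Y \ W).card) * ν Z W)
      = ∑ X : Finset E, ∑ Y ∈ (univ : Finset (Finset E)),
          ∑ Z ∈ (univ : Finset (Finset E)), ∑ W ∈ (univ : Finset (Finset E)),
          (if Y ⊆ X ∧ X ⊆ Z ∧ W ⊆ Y then
            u ^ X.card * v ^ Y.card * (-1 : R) ^ ((Z \ X).card + (Y \ W).card) * ν Z W
          else 0) := by
        apply Finset.sum_congr rfl
        intro X _
        rw [hpw X, Finset.sum_filter]
        apply Finset.sum_congr rfl
        intro Y _
        by_cases hYX : Y ⊆ X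
        · rw [if_pos hYX, Finset.mul_sum]
          rw [Finset.sum_filter]
          apply Finset.sum_congr rfl
          intro Z _
          by_cases hXZ : X ⊆ Z
          · rw [if_pos hXZ, Finset.mul_sum, hpw Y, Finset.sum_filter]
            apply Finset.sum_congr rfl
            intro W _
            by_cases hWY : W ⊆ Y
            · rw [if_pos hWY, if_pos ⟨hYX, hXZ, hWY⟩]; ring
            · rw [if_neg hWY, if_neg (by rintro ⟨_, _, h⟩; exact hWY h)]
          · rw [if_neg hXZ]
            symm
            apply Finset.sum_eq_zero
            intro W _
            rw [if_neg (by rintro ⟨_, h, _⟩; exact hXZ h)]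
        · rw [if_neg hYX]
          symm
          apply Finset.sum_eq_zero
          intro Z _
          apply Finset.sum_eq_zero
          intro W _
          rw [if_neg (by rintro ⟨h, _, _⟩; exact hYX h)]
    _ = ∑ Z : Finset E, ∑ W ∈ (univ : Finset (Finset E)),
          ∑ X ∈ (univ : Finset (Finset E)), ∑ Y ∈ (univ : Finset (Finset E)),
          (if Y ⊆ X ∧ X ⊆ Z ∧ W ⊆ Y then
            u ^ X.card * v ^ Y.card * (-1 : R) ^ ((Z \ X).card + (Y \ W).card) * ν Z W
          else 0) := by
        exact aux_sum4 _
    _ = ∑ Z : Finset E, ∑ W ∈ Z.powerset,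
        (u * v) ^ W.card * (u - u * v - 1) ^ (Z \ W).card * ν Z W := by
        apply Finset.sum_congr rfl
        intro Z _
        rw [hpw Z, Finset.sum_filter]
        apply Finset.sum_congr rfl
        intro W _
        have := aux_keyMain u v Z W
        calc
          ∑ X ∈ (univ : Finset (Finset E)), ∑ Y ∈ (univ : Finset (Finset E)),
            (if Y ⊆ X ∧ X ⊆ Z ∧ W ⊆ Y then
              u ^ X.card * v ^ Y.card * (-1 : R) ^ ((Z \ X).card + (Y \ W).card) * ν Z W
            else 0)
            = (∑ X ∈ (univ : Finset (Finset E)), ∑ Y ∈ (univ : Finset (Finset E)),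
              (if Y ⊆ X ∧ X ⊆ Z ∧ W ⊆ Y then
                u ^ X.card * v ^ Y.card * (-1 : R) ^ ((Z \ X).card + (Y \ W).card)
              else 0)) * ν Z W := by
              rw [Finset.sum_mul]
              apply Finset.sum_congr rfl
              intro X _
              rw [Finset.sum_mul]
              apply Finset.sum_congr rfl
              intro Y _
              split_ifs
              · rfl
              · rw [zero_mul]
          _ = if W ⊆ Z then (u * v) ^ W.card * (u - u * v - 1) ^ (Z \ W).card * ν Z W
              else 0 := by
              rw [this]
              split_ifs
              · rfl
              · rw [zero_mul]
end

section
/- Finite-set binomial identity: for fixed finite sets W ⊆ Z, ∑_{W ⊆ Y ⊆ X ⊆ Z} (−u)^{|X|} (−v)^{|Y|} = (uv)^{|W|} (uv − u + 1)^{|Z − W|}, where the sum is over all chains W ⊆ Y ⊆ X ⊆ Z of subsets, in the polynomial ring ℤ[u,v]. -/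
open Finset

lemma sum_subset_reindex {α : Type} [DecidableEq α] {M : Type} [AddCommMonoid M]
    (T Z : Finset α) (hTZ : T ⊆ Z) (f : Finset α → M) :
    ∑ S ∈ Z.powerset.filter (fun S => T ⊆ S), f S = ∑ A ∈ (Z \ T).powerset, f (T ∪ A) := by
  apply Finset.sum_bij' (fun S _ => S \ T) (fun A _ => T ∪ A)
  · intro S hS
    simp only [mem_filter, mem_powerset] at hS ⊢
    exact sdiff_subset_sdiff hS.1 (le_refl T)
  · intro A hA
    simp only [mem_powerset, mem_filter] at hA ⊢
    exact ⟨union_subset hTZ (hA.trans (sdiff_subset)), subset_union_left⟩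
  · intro S hS
    simp only [mem_filter, mem_powerset] at hS
    exact union_sdiff_of_subset hS.2
  · intro A hA
    simp only [mem_powerset] at hA
    rw [union_sdiff_cancel_left]
    exact disjoint_sdiff.mono_right hA
  · intro S hS
    simp only [mem_filter, mem_powerset] at hS
    rw [union_sdiff_of_subset hS.2]

lemma pow_add_sum {α : Type} [DecidableEq α] {R : Type} [CommRing R] (N : Finset α) (x y : R) :
    ∑ A ∈ N.powerset, x ^ A.card * y ^ (N \ A).card = (x + y) ^ N.card := by
  have h := Finset.prod_add (fun _ : α => x) (fun _ : α => y) N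
  simp only [Finset.prod_const] at h
  rw [← h]


/-- Finite-set binomial identity in `ℤ[u,v]` (with `u = X 0`, `v = X 1`): for
finite sets `W ⊆ Z`,
`∑_{W ⊆ Y ⊆ X ⊆ Z} (-u)^{|X|} (-v)^{|Y|} = (uv)^{|W|} (uv - u + 1)^{|Z∖W|}`. -/
theorem stmt12 {α : Type} [DecidableEq α] (W Z : Finset α) (hWZ : W ⊆ Z) :
    ∑ S ∈ Z.powerset, ∑ T ∈ S.powerset.filter (fun T => W ⊆ T),
      (-(MvPolynomial.X 0 : MvPolynomial (Fin 2) ℤ)) ^ S.card *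
        (-(MvPolynomial.X 1 : MvPolynomial (Fin 2) ℤ)) ^ T.card
    = ((MvPolynomial.X 0 : MvPolynomial (Fin 2) ℤ) * MvPolynomial.X 1) ^ W.card *
        ((MvPolynomial.X 0 : MvPolynomial (Fin 2) ℤ) * MvPolynomial.X 1 -
            MvPolynomial.X 0 + 1) ^ (Z \ W).card := by
  set u : MvPolynomial (Fin 2) ℤ := MvPolynomial.X 0
  set v : MvPolynomial (Fin 2) ℤ := MvPolynomial.X 1
  -- swap the two sums
  rw [Finset.sum_comm' (t' := Z.powerset.filter (fun T => W ⊆ T))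
      (s' := fun T => Z.powerset.filter (fun S => T ⊆ S))
      (by
        intro S T
        simp only [mem_powerset, mem_filter]
        tauto)]
  -- evaluate the inner sum over S ⊇ T
  have inner : ∀ T ∈ Z.powerset.filter (fun T => W ⊆ T),
      ∑ S ∈ Z.powerset.filter (fun S => T ⊆ S), (-u) ^ S.card * (-v) ^ T.card
        = (-u) ^ T.card * (-v) ^ T.card * (1 - u) ^ (Z \ T).card := by
    intro T hT
    simp only [mem_filter, mem_powerset] at hT
    rw [sum_subset_reindex T Z hT.1]
    have : ∀ A ∈ (Z \ T).powerset, (-u) ^ (T ∪ A).card * (-v) ^ T.card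
        = (-v) ^ T.card * (-u) ^ T.card * ((-u) ^ A.card * (1:MvPolynomial (Fin 2) ℤ) ^ ((Z \ T) \ A).card) := by
      intro A hA
      simp only [mem_powerset] at hA
      rw [card_union_of_disjoint (disjoint_sdiff.mono_right hA), pow_add, one_pow]
      ring
    rw [Finset.sum_congr rfl this, ← Finset.mul_sum, pow_add_sum]
    ring_nf
  rw [Finset.sum_congr rfl inner]
  -- reindex T = W ∪ B
  rw [sum_subset_reindex W Z hWZ]
  have : ∀ B ∈ (Z \ W).powerset, (-u) ^ (W ∪ B).card * (-v) ^ (W ∪ B).card * (1 - u) ^ (Z \ (W ∪ B)).card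
      = (u * v) ^ W.card * ((u * v) ^ B.card * (1 - u) ^ ((Z \ W) \ B).card) := by
    intro B hB
    simp only [mem_powerset] at hB
    have hset : Z \ (W ∪ B) = (Z \ W) \ B := by ext x; simp; tauto
    rw [card_union_of_disjoint (disjoint_sdiff.mono_right hB), hset]
    have h2 : (-u) ^ (W.card + B.card) * (-v) ^ (W.card + B.card)
        = (u * v) ^ W.card * (u * v) ^ B.card := by
      rw [← mul_pow, neg_mul_neg, ← pow_add]
    rw [h2]; ring
  rw [Finset.sum_congr rfl this, ← Finset.mul_sum, pow_add_sum]
  ring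
end

section
/- Combinatorial identity for the elliptic case: for finite sets Z, W ⊆ E, ∑ (−u)^{|X|}(−v)^{|Y|}, summed over pairs X ⊆ Z, W ⊆ Y ⊆ E with X ⊆ Y, equals (−v)^{|W|} (1−u)^{|W ∩ Z|} (1−v)^{|E − (W ∪ Z)|} (uv − v + 1)^{|Z − W|} in the field of rational functions ℚ(u,v) (and hence in ℤ[u,v]). -/
open Finset

section aux
variable {E : Type} [Fintype E] [DecidableEq E] {R : Type} [CommRing R]

private lemma sumB (A : Finset E) (x y : R) :
    ∑ S ∈ A.powerset, x ^ S.card * y ^ (A \ S).card = (x + y) ^ A.card := by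
  have := Finset.prod_add (fun _ : E => x) (fun _ => y) A
  simpa [Finset.prod_const] using this.symm

private lemma sumB1 (A : Finset E) (x : R) :
    ∑ S ∈ A.powerset, x ^ S.card = (x + 1) ^ A.card := by
  have := sumB A x (1 : R)
  simpa using this

private lemma sumA (A : Finset E) (c : R) :
    ∑ T ∈ (univ : Finset E).powerset.filter (fun T => A ⊆ T), c ^ T.card
      = c ^ A.card * (c + 1) ^ (univ \ A).card := by
  rw [Finset.sum_nbij' (fun T => T \ A) (fun U => U ∪ A)
      (t := (univ \ A).powerset) (g := fun U => c ^ A.card * c ^ U.card)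
      ?_ ?_ ?_ ?_ ?_]
  · rw [← Finset.mul_sum, sumB1]
  · intro T hT
    simp only [mem_filter, mem_powerset] at hT ⊢
    exact sdiff_subset_sdiff (subset_univ T) le_rfl
  · intro U hU
    simp only [mem_powerset] at hU
    simp [subset_union_right]
  · intro T hT
    simp only [mem_filter, mem_powerset] at hT
    exact sdiff_union_of_subset hT.2
  · intro U hU
    simp only [mem_powerset] at hU
    have hd : Disjoint U A := (subset_sdiff.mp hU).2
    rw [union_sdiff_right, sdiff_eq_self_of_disjoint hd]
  · intro T hT
    simp only [mem_filter, mem_powerset] at hT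
    rw [← pow_add, ← card_sdiff_add_card_eq_card hT.2, add_comm]

private lemma sum_powerset_split (A B : Finset E) (h : Disjoint A B) (f : Finset E → R) :
    ∑ S ∈ (A ∪ B).powerset, f S
      = ∑ p ∈ A.powerset ×ˢ B.powerset, f (p.1 ∪ p.2) := by
  rw [Finset.sum_nbij' (fun S => (S ∩ A, S ∩ B)) (fun p => p.1 ∪ p.2) ?_ ?_ ?_ ?_ ?_]
  · intro S hS
    simp only [mem_powerset] at hS
    simp [mem_product, inter_subset_right]
  · intro p hp
    simp only [mem_product, mem_powerset] at hp ⊢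
    exact union_subset_union hp.1 hp.2
  · intro S hS
    simp only [mem_powerset] at hS
    dsimp only
    rw [← inter_union_distrib_left, inter_eq_left.mpr hS]
  · intro p hp
    simp only [mem_product, mem_powerset] at hp
    have h1 : p.1 ∩ B = ∅ := disjoint_iff_inter_eq_empty.mp (h.mono hp.1 le_rfl)
    have h2 : p.2 ∩ A = ∅ := disjoint_iff_inter_eq_empty.mp (h.symm.mono hp.2 le_rfl)
    rw [Prod.mk.injEq]
    refine ⟨?_, ?_⟩
    · rw [union_inter_distrib_right, inter_eq_left.mpr hp.1, h2, union_empty]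
    · rw [union_inter_distrib_right, inter_eq_left.mpr hp.2, h1, empty_union]
  · intro S hS
    simp only [mem_powerset] at hS
    dsimp only
    rw [← inter_union_distrib_left, inter_eq_left.mpr hS]
end aux

/-- Combinatorial identity (elliptic case) in `ℤ[u,v]` (with `u = X 0`,
`v = X 1`): for subsets `Z, W` of a finite set `E`,
`∑_{X ⊆ Z, W ⊆ Y, X ⊆ Y} (-u)^{|X|} (-v)^{|Y|}
 = (-v)^{|W|} (1-u)^{|W∩Z|} (1-v)^{|E∖(W∪Z)|} (uv - v + 1)^{|Z∖W|}`. -/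
theorem stmt15 {E : Type} [Fintype E] [DecidableEq E] (Z W : Finset E) :
    ∑ S ∈ Z.powerset,
      ∑ T ∈ (univ : Finset E).powerset.filter (fun T => W ⊆ T ∧ S ⊆ T),
        (-(MvPolynomial.X 0 : MvPolynomial (Fin 2) ℤ)) ^ S.card *
          (-(MvPolynomial.X 1 : MvPolynomial (Fin 2) ℤ)) ^ T.card
    = (-(MvPolynomial.X 1 : MvPolynomial (Fin 2) ℤ)) ^ W.card *
        (1 - (MvPolynomial.X 0 : MvPolynomial (Fin 2) ℤ)) ^ (W ∩ Z).card *
        (1 - (MvPolynomial.X 1 : MvPolynomial (Fin 2) ℤ)) ^ ((univ \ (W ∪ Z)).card) *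
        ((MvPolynomial.X 0 : MvPolynomial (Fin 2) ℤ) * MvPolynomial.X 1 -
            MvPolynomial.X 1 + 1) ^ (Z \ W).card := by
  classical
  set u := (MvPolynomial.X 0 : MvPolynomial (Fin 2) ℤ) with hu
  set v := (MvPolynomial.X 1 : MvPolynomial (Fin 2) ℤ) with hv
  set n := Fintype.card E with hn
  set w := W.card with hw
  set k := (Z \ W).card with hk
  set m := (univ \ (W ∪ Z)).card with hm
  have hdisjWZ : Disjoint W (Z \ W) := disjoint_sdiff
  have hWZcard : (W ∪ Z).card = w + k := by
    rw [← union_sdiff_self_eq_union, card_union_of_disjoint hdisjWZ]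
  have hWZle : w + k ≤ n := by rw [← hWZcard]; exact card_le_univ _
  have hmval : m = n - (w + k) := by
    rw [hm, card_sdiff_of_subset (subset_univ _), card_univ, hWZcard]
  have hdisjZ : Disjoint (Z ∩ W) (Z \ W) := disjoint_sdiff.mono_left inter_subset_right
  have hZsplit : Z ∩ W ∪ Z \ W = Z := sup_inf_sdiff Z W
  calc
    ∑ S ∈ Z.powerset,
      ∑ T ∈ (univ : Finset E).powerset.filter (fun T => W ⊆ T ∧ S ⊆ T),
        (-u) ^ S.card * (-v) ^ T.card
      = ∑ S ∈ Z.powerset,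
          (-u) ^ S.card * ((-v) ^ (W ∪ S).card * (-v + 1) ^ (univ \ (W ∪ S)).card) := by
        refine sum_congr rfl fun S hS => ?_
        rw [← mul_sum]
        congr 1
        rw [← sumA (W ∪ S) (-v)]
        refine sum_congr ?_ fun _ _ => rfl
        apply filter_congr
        intro T _
        simp [union_subset_iff]
    _ = ∑ p ∈ (Z ∩ W).powerset ×ˢ (Z \ W).powerset,
          (-u) ^ (p.1 ∪ p.2).card *
            ((-v) ^ (W ∪ (p.1 ∪ p.2)).card * (-v + 1) ^ (univ \ (W ∪ (p.1 ∪ p.2))).card) := by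
        conv_lhs => rw [← hZsplit]
        exact sum_powerset_split _ _ hdisjZ _
    _ = ∑ S1 ∈ (Z ∩ W).powerset, ∑ S2 ∈ (Z \ W).powerset,
          (-u) ^ S1.card *
            (((u * v) ^ S2.card * (-v + 1) ^ ((Z \ W) \ S2).card) *
              ((-v) ^ w * (-v + 1) ^ m)) := by
        rw [Finset.sum_product]
        refine sum_congr rfl fun S1 h1 => sum_congr rfl fun S2 h2 => ?_
        simp only [mem_powerset] at h1 h2
        have hd12 : Disjoint S1 S2 := hdisjZ.mono h1 h2
        have hdWS2 : Disjoint W S2 := hdisjWZ.mono_right h2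
        have hWU : W ∪ (S1 ∪ S2) = W ∪ S2 := by
          rw [← union_assoc, union_eq_left.mpr (h1.trans inter_subset_right)]
        have hc1 : (S1 ∪ S2).card = S1.card + S2.card := card_union_of_disjoint hd12
        have hc2 : (W ∪ (S1 ∪ S2)).card = w + S2.card := by
          rw [hWU, card_union_of_disjoint hdWS2]
        have hc3 : (univ \ (W ∪ (S1 ∪ S2))).card = n - (w + S2.card) := by
          rw [card_sdiff_of_subset (subset_univ _), card_univ, hc2]
        have hS2k : S2.card ≤ k := card_le_card h2
        have hc4 : ((Z \ W) \ S2).card = k - S2.card := card_sdiff_of_subset h2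
        have harith : n - (w + S2.card) = (k - S2.card) + m := by omega
        rw [hc1, hc2, hc3, hc4, harith, pow_add, pow_add, pow_add]
        have : (-u) ^ S2.card * (-v) ^ S2.card = (u * v) ^ S2.card := by
          rw [← mul_pow]; ring_nf
        rw [← this]
        ring
    _ = ((-u + 1) ^ (Z ∩ W).card) *
          (((u * v + (-v + 1)) ^ k) * ((-v) ^ w * (-v + 1) ^ m)) := by
        rw [← Finset.sum_mul_sum, ← Finset.sum_mul, sumB, sumB1, hk]
    _ = (-v) ^ w * (1 - u) ^ (W ∩ Z).card * (1 - v) ^ m * (u * v - v + 1) ^ k := by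
        rw [inter_comm W Z]
        have e1 : -u + 1 = 1 - u := by ring
        have e2 : -v + 1 = 1 - v := by ring
        have e3 : u * v + (-v + 1) = u * v - v + 1 := by ring
        rw [e1, e3, e2]
        ring
end

section
/- Let G be a finite graph with orientation ρ, and let Δ⁺_CTF(G,ρ) = {(f,g) ∈ K(G,ρ) : 0 < f + g < 1} be the open complementary polytope, where K(G,ρ) is the set of real complementary tension-flows. Then Δ⁺_CTF(G,ρ) decomposes as the cartesian product Δ⁺_TN(G,B_ρ) × Δ⁺_FL(G,C_ρ), where Δ⁺_TN(G,B_ρ) = {f ∈ T(G,ρ) : 0 < f|_{B_ρ} < 1, f|_{C_ρ} = 0} and Δ⁺_FL(G,C_ρ) = {g ∈ F(G,ρ) : g|_{B_ρ} = 0, 0 < g|_{C_ρ} < 1}. -/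
/-- A directed circuit of the digraph given by `tl, hd : E → V`: a cyclically
ordered nonempty list of distinct edges with distinct vertices, each edge's head
being the next edge's tail. `C` is its edge set. -/
def IsDirectedCircuit {V E : Type} (tl hd : E → V) (C : Set E) : Prop :=
  ∃ l : List E, l ≠ [] ∧ l.Nodup ∧ (l.map tl).Nodup ∧ C = {e | e ∈ l} ∧
    ∀ i : Fin l.length,
      hd (l.get i) = tl (l.get ⟨(i.1 + 1) % l.length, Nat.mod_lt _ i.pos⟩)

/-- The set of edges between `S` and its complement. -/
def cutSet {V E : Type} (tl hd : E → V) (S : Set V) : Set E :=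
  {e | (tl e ∈ S ∧ hd e ∉ S) ∨ (tl e ∉ S ∧ hd e ∈ S)}

/-- A cut: a nonempty edge set of the form `[S, Sᶜ]`. -/
def IsCut {V E : Type} (tl hd : E → V) (C : Set E) : Prop :=
  ∃ S : Set V, C = cutSet tl hd S ∧ C.Nonempty

/-- A bond: a cut not properly containing any cut. -/
def IsBond {V E : Type} (tl hd : E → V) (C : Set E) : Prop :=
  IsCut tl hd C ∧ ∀ C', IsCut tl hd C' → C' ⊆ C → C' = C

/-- A directed bond: a bond all of whose edges are oriented from `S` to `Sᶜ`. -/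
def IsDirectedBond {V E : Type} (tl hd : E → V) (C : Set E) : Prop :=
  IsBond tl hd C ∧ ∃ S : Set V, C = cutSet tl hd S ∧ ∀ e ∈ C, tl e ∈ S ∧ hd e ∉ S

/-- `B_ρ`: the union of the edge sets of all directed bonds. -/
def bondUnion {V E : Type} (tl hd : E → V) : Set E :=
  {e | ∃ C, IsDirectedBond tl hd C ∧ e ∈ C}

/-- `C_ρ`: the union of the edge sets of all directed circuits. -/
def circUnion {V E : Type} (tl hd : E → V) : Set E :=
  {e | ∃ C, IsDirectedCircuit tl hd C ∧ e ∈ C}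


/-- `f : E → A` is a tension of the digraph `tl, hd : E → V`: it is the
coboundary of a potential `p : V → A`. -/
def IsTension {V E A : Type} [AddCommGroup A] (tl hd : E → V) (f : E → A) : Prop :=
  ∃ p : V → A, ∀ e, f e = p (tl e) - p (hd e)

/-- `g : E → B` is a flow of the digraph `tl, hd : E → V`: conservation holds
at every vertex. -/
def IsFlow {V E B : Type} [Fintype E] [DecidableEq V] [AddCommGroup B]
    (tl hd : E → V) (g : E → B) : Prop :=
  ∀ v : V, ∑ e ∈ Finset.univ.filter (fun e => tl e = v), g e
         = ∑ e ∈ Finset.univ.filter (fun e => hd e = v), g e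

section Stmt19AuxSec
namespace Stmt19Aux
variable {V E : Type}

def DirCut (tl hd : E → V) (S : Set V) : Prop :=
  ∀ e ∈ cutSet tl hd S, tl e ∈ S ∧ hd e ∉ S

lemma cutSet_compl (tl hd : E → V) (S : Set V) : cutSet tl hd Sᶜ = cutSet tl hd S := by
  ext e; simp only [cutSet, Set.mem_setOf_eq, Set.mem_compl_iff]; tauto

lemma diff_cut (tl hd : E → V) {S T : Set V} (hsub : cutSet tl hd T ⊆ cutSet tl hd S) :
    cutSet tl hd S \ cutSet tl hd T = cutSet tl hd (symmDiff S T) := by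
  ext e
  have h := @hsub e
  simp only [cutSet, Set.mem_setOf_eq, Set.mem_diff, Set.mem_symmDiff] at *
  tauto

lemma inter_subset (tl hd : E → V) {S T : Set V}
    (hsub : cutSet tl hd T ⊆ cutSet tl hd S) :
    cutSet tl hd (S ∩ T) ⊆ cutSet tl hd S := by
  intro e he
  have h1 := @hsub e
  simp only [cutSet, Set.mem_setOf_eq, Set.mem_inter_iff] at *
  tauto

lemma dirCut_inter (tl hd : E → V) {S T : Set V} (hU : DirCut tl hd S)
    (hsub : cutSet tl hd T ⊆ cutSet tl hd S) : DirCut tl hd (S ∩ T) := by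
  intro e he
  have h1 := @hsub e
  have h2 := hU e
  simp only [cutSet, DirCut, Set.mem_setOf_eq, Set.mem_inter_iff] at *
  tauto

lemma mem_cut_inter (tl hd : E → V) {S T : Set V} (hU : DirCut tl hd S)
    (hsub : cutSet tl hd T ⊆ cutSet tl hd S) {e : E} (he : e ∈ cutSet tl hd T)
    (ht : tl e ∈ T) : e ∈ cutSet tl hd (S ∩ T) := by
  have h1 := hsub he
  have h2 := hU e h1
  simp only [cutSet, Set.mem_setOf_eq, Set.mem_inter_iff] at *
  tauto

lemma mem_bondUnion [Fintype E] (tl hd : E → V) {e : E} {S₀ : Set V}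
    (hd0 : DirCut tl hd S₀) (he0 : e ∈ cutSet tl hd S₀) : e ∈ bondUnion tl hd := by
  classical
  have hex : ∃ n, ∃ S : Set V, DirCut tl hd S ∧ e ∈ cutSet tl hd S ∧
      (cutSet tl hd S).ncard = n := ⟨_, S₀, hd0, he0, rfl⟩
  obtain ⟨S, hdir, he, hcard⟩ := Nat.find_spec hex
  have claim : ∀ T : Set V, e ∈ cutSet tl hd T → cutSet tl hd T ⊆ cutSet tl hd S →
      cutSet tl hd T = cutSet tl hd S := by
    intro T heT hsub
    obtain ⟨T', hTe, ht'⟩ : ∃ T', cutSet tl hd T' = cutSet tl hd T ∧ tl e ∈ T' := by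
      by_cases h : tl e ∈ T
      · exact ⟨T, rfl, h⟩
      · refine ⟨Tᶜ, cutSet_compl tl hd T, h⟩
    rw [← hTe] at heT hsub ⊢
    by_cases hall : ∀ d ∈ cutSet tl hd T', tl d ∈ T'
    · have hdirT : DirCut tl hd T' := by
        intro d hd'
        have h1 := hall d hd'
        refine ⟨h1, ?_⟩
        rcases hd' with ⟨_, h⟩ | ⟨h, _⟩
        · exact h
        · exact absurd h1 h
      have hle : Nat.find hex ≤ (cutSet tl hd T').ncard :=
        Nat.find_min' hex ⟨T', hdirT, heT, rfl⟩
      exact Set.eq_of_subset_of_ncard_le hsub (by rw [hcard]; exact hle) (Set.toFinite _)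
    · push_neg at hall
      obtain ⟨d, hdT, hdt⟩ := hall
      exfalso
      have h1 : e ∈ cutSet tl hd (S ∩ T') := mem_cut_inter tl hd hdir hsub heT ht'
      have h2 : cutSet tl hd (S ∩ T') ⊆ cutSet tl hd S := inter_subset tl hd hsub
      have h3 : d ∉ cutSet tl hd (S ∩ T') := fun h =>
        hdt ((dirCut_inter tl hd hdir hsub) d h).1.2
      have hne' : cutSet tl hd (S ∩ T') ≠ cutSet tl hd S := by
        intro hh; rw [hh] at h3; exact h3 (hsub hdT)
      have hlt : (cutSet tl hd (S ∩ T')).ncard < Nat.find hex := by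
        rw [← hcard]
        exact Set.ncard_lt_ncard (h2.ssubset_of_ne hne') (Set.toFinite _)
      exact Nat.find_min hex hlt ⟨S ∩ T', dirCut_inter tl hd hdir hsub, h1, rfl⟩
  refine ⟨cutSet tl hd S, ⟨⟨⟨S, rfl, ⟨e, he⟩⟩, ?_⟩, ⟨S, rfl, hdir⟩⟩, he⟩
  intro C' hC' hsubC'
  obtain ⟨T, rfl, hne⟩ := hC'
  by_cases heC : e ∈ cutSet tl hd T
  · exact claim T heC hsubC'
  · have hdiff := diff_cut tl hd hsubC'
    have heD : e ∈ cutSet tl hd (symmDiff S T) := by rw [← hdiff]; exact ⟨he, heC⟩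
    have hsubD : cutSet tl hd (symmDiff S T) ⊆ cutSet tl hd S := by
      rw [← hdiff]; exact Set.diff_subset
    have hC := claim _ heD hsubD
    exfalso
    obtain ⟨d, hd'⟩ := hne
    have hd2 : d ∈ cutSet tl hd S := hsubC' hd'
    have : d ∈ cutSet tl hd S \ cutSet tl hd T := by rw [hdiff, hC]; exact hd2
    exact this.2 hd'

def Walk (tl hd : E → V) : List E → V → V → Prop
  | [], a, b => a = b
  | e :: l, a, b => tl e = a ∧ Walk tl hd l (hd e) b

lemma walk_append (tl hd : E → V) (l₁ l₂ : List E) (a b : V) :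
    Walk tl hd (l₁ ++ l₂) a b ↔ ∃ c, Walk tl hd l₁ a c ∧ Walk tl hd l₂ c b := by
  induction l₁ generalizing a with
  | nil => simp [Walk]
  | cons e l₁ ih =>
    constructor
    · rintro ⟨h1, h2⟩
      obtain ⟨c, hc1, hc2⟩ := (ih _).mp h2
      exact ⟨c, ⟨h1, hc1⟩, hc2⟩
    · rintro ⟨c, ⟨h1, hc1⟩, hc2⟩
      exact ⟨h1, (ih _).mpr ⟨c, hc1, hc2⟩⟩

lemma reach_walk (tl hd : E → V) {a b : V}
    (h : Relation.ReflTransGen (fun u v => ∃ e, tl e = u ∧ hd e = v) a b) :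
    ∃ l, Walk tl hd l a b := by
  induction h using Relation.ReflTransGen.head_induction_on with
  | refl => exact ⟨[], rfl⟩
  | head hstep _ ih =>
    obtain ⟨e, he1, he2⟩ := hstep
    obtain ⟨l, hl⟩ := ih
    exact ⟨e :: l, he1, by rw [he2]; exact hl⟩

lemma walk_split (tl hd : E → V) {l : List E} {a b : V} (h : Walk tl hd l a b)
    {i : ℕ} (hi : i < l.length) :
    Walk tl hd (l.take i) a (tl (l.get ⟨i, hi⟩)) ∧
    Walk tl hd (l.drop i) (tl (l.get ⟨i, hi⟩)) b := by
  have h' : Walk tl hd (l.take i ++ l.drop i) a b := by rw [List.take_append_drop]; exact h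
  obtain ⟨c, h1, h2⟩ := (walk_append tl hd _ _ _ _).mp h'
  have hdrop : l.drop i = l.get ⟨i, hi⟩ :: l.drop (i + 1) := List.drop_eq_getElem_cons hi
  rw [hdrop] at h2
  obtain ⟨hc, h3⟩ := h2
  subst hc
  exact ⟨h1, by rw [hdrop]; exact ⟨rfl, h3⟩⟩

lemma walk_tl_zero (tl hd : E → V) {l : List E} {a b : V} (h : Walk tl hd l a b)
    (h0 : 0 < l.length) : tl (l.get ⟨0, h0⟩) = a := by
  cases l with
  | nil => simp at h0
  | cons e l => exact h.1

lemma walk_tl_succ (tl hd : E → V) {l : List E} {a b : V} (h : Walk tl hd l a b)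
    {i : ℕ} (hi : i + 1 < l.length) :
    tl (l.get ⟨i + 1, hi⟩) = hd (l.get ⟨i, Nat.lt_of_succ_lt hi⟩) := by
  induction l generalizing a i with
  | nil => simp at hi
  | cons e l ih =>
    cases i with
    | zero =>
      have : 0 < l.length := by simpa using hi
      exact walk_tl_zero tl hd h.2 this
    | succ j =>
      exact ih h.2 (by simpa using hi)

lemma walk_hd_last (tl hd : E → V) {l : List E} {a b : V} (h : Walk tl hd l a b)
    (h0 : 0 < l.length) : hd (l.get ⟨l.length - 1, by omega⟩) = b := by
  induction l generalizing a with
  | nil => simp at h0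
  | cons e l ih =>
    cases l with
    | nil => exact h.2
    | cons e' l' =>
      have := ih h.2 (by simp)
      simpa using this

lemma mem_circUnion_of_reach (tl hd : E → V) {e : E}
    (h : Relation.ReflTransGen (fun u v => ∃ e', tl e' = u ∧ hd e' = v) (hd e) (tl e)) :
    e ∈ circUnion tl hd := by
  classical
  have hex : ∃ n, ∃ l : List E, Walk tl hd l (hd e) (tl e) ∧ l.length = n := by
    obtain ⟨l, hl⟩ := reach_walk tl hd h
    exact ⟨l.length, l, hl, rfl⟩
  obtain ⟨l, hw, hlen⟩ := Nat.find_spec hex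
  have h1 : ∀ (i : ℕ) (hi : i < l.length), tl (l.get ⟨i, hi⟩) ≠ tl e := by
    intro i hi hteq
    have hwt := (walk_split tl hd hw hi).1
    rw [hteq] at hwt
    refine Nat.find_min hex ?_ ⟨l.take i, hwt, rfl⟩
    rw [← hlen]
    simp only [List.length_take]
    omega
  have h2 : ∀ (i j : ℕ) (hi : i < l.length) (hj : j < l.length), i < j →
      tl (l.get ⟨i, hi⟩) ≠ tl (l.get ⟨j, hj⟩) := by
    intro i j hi hj hij heq
    have hwi := (walk_split tl hd hw hi).1
    have hwj := (walk_split tl hd hw hj).2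
    rw [← heq] at hwj
    have hw' : Walk tl hd (l.take i ++ l.drop j) (hd e) (tl e) :=
      (walk_append tl hd _ _ _ _).mpr ⟨_, hwi, hwj⟩
    refine Nat.find_min hex ?_ ⟨_, hw', rfl⟩
    rw [← hlen]
    simp only [List.length_append, List.length_take, List.length_drop]
    omega
  have hnt : ((e :: l).map tl).Nodup := by
    rw [List.map_cons]
    refine List.nodup_cons.mpr ⟨?_, ?_⟩
    · intro hmem
      obtain ⟨x, hx, hxe⟩ := List.mem_map.mp hmem
      obtain ⟨i, hi⟩ := List.mem_iff_get.mp hx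
      exact h1 i.1 i.2 (by rw [hi]; exact hxe)
    · rw [List.nodup_iff_injective_get]
      intro i j hij
      have hlm : (l.map tl).length = l.length := List.length_map tl
      have hi' : i.1 < l.length := hlm ▸ i.2
      have hj' : j.1 < l.length := hlm ▸ j.2
      have e1 : (l.map tl).get i = tl (l.get ⟨i.1, hi'⟩) := by
        simp [List.get_eq_getElem, List.getElem_map]
      have e2 : (l.map tl).get j = tl (l.get ⟨j.1, hj'⟩) := by
        simp [List.get_eq_getElem, List.getElem_map]
      rw [e1, e2] at hij
      rcases Nat.lt_trichotomy i.1 j.1 with hlt | heq | hlt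
      · exact absurd hij (h2 _ _ _ _ hlt)
      · exact Fin.ext heq
      · exact absurd hij.symm (h2 _ _ _ _ hlt)
  refine ⟨{e' | e' ∈ e :: l}, ⟨e :: l, List.cons_ne_nil e l, List.Nodup.of_map tl hnt,
    hnt, rfl, ?_⟩, List.mem_cons_self⟩
  rintro ⟨iv, hiv⟩
  have hlen1 : (e :: l).length = l.length + 1 := rfl
  rcases Nat.lt_or_ge iv l.length with hlt | hge
  · have hmod : (iv + 1) % (e :: l).length = iv + 1 := Nat.mod_eq_of_lt (by rw [hlen1]; omega)
    simp only [List.get_eq_getElem, hmod]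
    cases iv with
    | zero =>
      have h0 : 0 < l.length := hlt
      have := walk_tl_zero tl hd hw h0
      simp only [List.getElem_cons_zero, List.getElem_cons_succ]
      rw [show l[0] = l.get ⟨0, h0⟩ from rfl, this]
    | succ k =>
      have hk : k + 1 < l.length := hlt
      have := walk_tl_succ tl hd hw hk
      simp only [List.getElem_cons_succ]
      rw [show l[k+1] = l.get ⟨k+1, hk⟩ from rfl, this]
      rfl
  · have hiveq : iv = l.length := by rw [hlen1] at hiv; omega
    subst hiveq
    have hmod : (l.length + 1) % (e :: l).length = 0 := by rw [hlen1]; simp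
    simp only [List.get_eq_getElem, hmod, List.getElem_cons_zero]
    have hwL : Walk tl hd (e :: l) (tl e) (tl e) := by exact ⟨rfl, hw⟩
    have hlast := walk_hd_last tl hd hwL (by simp : 0 < (e :: l).length)
    simp only [List.get_eq_getElem, List.length_cons, Nat.add_sub_cancel] at hlast
    exact hlast

lemma mem_bond_or_circ [Fintype E] (tl hd : E → V) (e : E) :
    e ∈ bondUnion tl hd ∨ e ∈ circUnion tl hd := by
  classical
  by_cases hreach :
      Relation.ReflTransGen (fun u v => ∃ e', tl e' = u ∧ hd e' = v) (hd e) (tl e)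
  · exact Or.inr (mem_circUnion_of_reach tl hd hreach)
  · left
    set R : Set V := {v | Relation.ReflTransGen (fun u v => ∃ e', tl e' = u ∧ hd e' = v) (hd e) v}
      with hR
    have hclosed : ∀ e', tl e' ∈ R → hd e' ∈ R := fun e' h =>
      Relation.ReflTransGen.tail h ⟨e', rfl, rfl⟩
    have he0 : e ∈ cutSet tl hd Rᶜ :=
      Or.inl ⟨hreach, fun h => h Relation.ReflTransGen.refl⟩
    have hd0 : DirCut tl hd Rᶜ := by
      rintro e' (⟨h1, h2⟩ | ⟨h1, h2⟩)
      · exact ⟨h1, h2⟩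
      · exact absurd (hclosed e' (not_not.mp h1)) h2
    exact mem_bondUnion tl hd hd0 he0

lemma tension_zero_on_circ (tl hd : E → V) {f : E → ℝ} (hf : IsTension tl hd f)
    (hpos : ∀ e, 0 ≤ f e) {e : E} (he : e ∈ circUnion tl hd) : f e = 0 := by
  classical
  obtain ⟨C, ⟨l, hne, _, _, hC, hcyc⟩, heC⟩ := he
  rw [hC] at heC
  obtain ⟨p, hp⟩ := hf
  have hn : 0 < l.length := List.length_pos_iff.mpr hne
  set n := l.length with hnn
  let σ : Fin n → Fin n := fun i => ⟨(i.1 + 1) % n, Nat.mod_lt _ hn⟩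
  have key : ∀ m : ℕ, m < n → ((m + 1) % n + (n - 1)) % n = m := by
    intro m hm
    rw [Nat.mod_add_mod]
    have : m + 1 + (n - 1) = m + n := by omega
    rw [this, Nat.add_mod_right, Nat.mod_eq_of_lt hm]
  have hinj : Function.Injective σ := by
    intro a b hab
    have h : (a.1 + 1) % n = (b.1 + 1) % n := congrArg Fin.val hab
    apply Fin.ext
    calc a.1 = ((a.1 + 1) % n + (n - 1)) % n := (key a.1 a.2).symm
      _ = ((b.1 + 1) % n + (n - 1)) % n := by rw [h]
      _ = b.1 := key b.1 b.2
  have hbij : Function.Bijective σ := Finite.injective_iff_bijective.mp hinj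
  have hterm : ∀ i : Fin n, f (l.get i) = p (tl (l.get i)) - p (tl (l.get (σ i))) := by
    intro i
    rw [hp, hcyc i]
  have hsum : ∑ i : Fin n, f (l.get i) = 0 := by
    rw [Finset.sum_congr rfl (fun i _ => hterm i), Finset.sum_sub_distrib]
    rw [Fintype.sum_bijective σ hbij (fun i => p (tl (l.get (σ i))))
      (fun j => p (tl (l.get j))) (fun i => rfl)]
    exact sub_self _
  obtain ⟨i, hi⟩ := List.mem_iff_get.mp heC
  have := (Finset.sum_eq_zero_iff_of_nonneg (fun i _ => hpos (l.get i))).mp hsum i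
    (Finset.mem_univ i)
  rw [← hi]
  exact this

lemma flow_zero_on_bond [Fintype V] [Fintype E] [DecidableEq V] (tl hd : E → V)
    {g : E → ℝ} (hg : IsFlow tl hd g) (hpos : ∀ e, 0 ≤ g e) {e : E}
    (he : e ∈ bondUnion tl hd) : g e = 0 := by
  classical
  obtain ⟨C, ⟨_, S, rfl, hdir⟩, heC⟩ := he
  have key : ∀ F : E → V,
      ∑ e' ∈ Finset.univ.filter (fun e' => F e' ∈ S), g e'
      = ∑ v ∈ Finset.univ.filter (fun v => v ∈ S),
          ∑ e' ∈ Finset.univ.filter (fun e' => F e' = v), g e' := by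
    intro F
    rw [Finset.sum_fiberwise_eq_sum_filter Finset.univ (Finset.univ.filter (fun v => v ∈ S)) F g]
    apply Finset.sum_congr
    · apply Finset.filter_congr
      intro x _
      simp
    · intros; rfl
  have hsum : ∑ e' ∈ Finset.univ.filter (fun e' => tl e' ∈ S), g e'
      = ∑ e' ∈ Finset.univ.filter (fun e' => hd e' ∈ S), g e' := by
    rw [key tl, key hd]
    exact Finset.sum_congr rfl fun v _ => hg v
  have split1 := Finset.sum_filter_add_sum_filter_not
    (Finset.univ.filter (fun e' => tl e' ∈ S)) (fun e' => hd e' ∈ S) g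
  have split2 := Finset.sum_filter_add_sum_filter_not
    (Finset.univ.filter (fun e' => hd e' ∈ S)) (fun e' => tl e' ∈ S) g
  rw [Finset.filter_filter, Finset.filter_filter] at split1 split2
  have hcomm : Finset.univ.filter (fun e' => tl e' ∈ S ∧ hd e' ∈ S)
      = Finset.univ.filter (fun e' => hd e' ∈ S ∧ tl e' ∈ S) := by
    apply Finset.filter_congr
    intro x _
    constructor <;> exact fun h => ⟨h.2, h.1⟩
  have hempty : Finset.univ.filter (fun e' => hd e' ∈ S ∧ ¬ tl e' ∈ S) = ∅ := by
    rw [Finset.filter_eq_empty_iff]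
    rintro x - ⟨hx1, hx2⟩
    exact hx2 (hdir x (Or.inr ⟨hx2, hx1⟩)).1
  rw [hempty, Finset.sum_empty, ← hcomm] at split2
  have hzero : ∑ e' ∈ Finset.univ.filter (fun e' => tl e' ∈ S ∧ ¬ hd e' ∈ S), g e' = 0 := by
    linarith
  have hmem : e ∈ Finset.univ.filter (fun e' => tl e' ∈ S ∧ ¬ hd e' ∈ S) := by
    have := hdir e heC
    simp [this.1, this.2]
  exact (Finset.sum_eq_zero_iff_of_nonneg (fun x _ => hpos x)).mp hzero e hmem

end Stmt19Aux
end Stmt19AuxSec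

/-- The open complementary polytope
`Δ⁺_CTF(G,ρ) = {(f,g) ∈ K(G,ρ) : 0 < f + g < 1}` (with `K(G,ρ)` the set of
real complementary tension-flows, `supp g = ker f`) decomposes as the cartesian
product `Δ⁺_TN(G,B_ρ) × Δ⁺_FL(G,C_ρ)`. -/
theorem stmt19 {V E : Type} [Fintype V] [Fintype E] [DecidableEq V]
    (tl hd : E → V) :
    {fg : (E → ℝ) × (E → ℝ) |
        IsTension tl hd fg.1 ∧ IsFlow tl hd fg.2 ∧
        (∀ e : E, fg.2 e ≠ 0 ↔ fg.1 e = 0) ∧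
        ∀ e : E, 0 < fg.1 e + fg.2 e ∧ fg.1 e + fg.2 e < 1}
    = {f : E → ℝ | IsTension tl hd f ∧
          (∀ e ∈ bondUnion tl hd, 0 < f e ∧ f e < 1) ∧
          ∀ e ∈ circUnion tl hd, f e = 0} ×ˢ
      {g : E → ℝ | IsFlow tl hd g ∧
          (∀ e ∈ bondUnion tl hd, g e = 0) ∧
          ∀ e ∈ circUnion tl hd, 0 < g e ∧ g e < 1} := by
  classical
  ext ⟨f, g⟩
  simp only [Set.mem_setOf_eq, Set.mem_prod]
  constructor
  · rintro ⟨htf, hgf, hcomp, hbound⟩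
    have hcases : ∀ e, (g e = 0 ∧ 0 < f e ∧ f e < 1) ∨ (f e = 0 ∧ 0 < g e ∧ g e < 1) := by
      intro e
      by_cases hg0 : g e = 0
      · have h := hbound e
        rw [hg0] at h
        exact Or.inl ⟨hg0, by linarith [h.1], by linarith [h.2]⟩
      · have hf0 : f e = 0 := (hcomp e).mp hg0
        have h := hbound e
        rw [hf0] at h
        exact Or.inr ⟨hf0, by linarith [h.1], by linarith [h.2]⟩
    have hfnn : ∀ e, 0 ≤ f e := fun e => by
      rcases hcases e with h | h
      exacts [le_of_lt h.2.1, le_of_eq h.1.symm]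
    have hgnn : ∀ e, 0 ≤ g e := fun e => by
      rcases hcases e with h | h
      exacts [le_of_eq h.1.symm, le_of_lt h.2.1]
    have hcz : ∀ e ∈ circUnion tl hd, f e = 0 := fun e he =>
      Stmt19Aux.tension_zero_on_circ tl hd htf hfnn he
    have hbz : ∀ e ∈ bondUnion tl hd, g e = 0 := fun e he =>
      Stmt19Aux.flow_zero_on_bond tl hd hgf hgnn he
    refine ⟨⟨htf, ?_, hcz⟩, hgf, hbz, ?_⟩
    · intro e he
      rcases hcases e with h | h
      · exact h.2
      · exact absurd (hbz e he) h.2.1.ne'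
    · intro e he
      rcases hcases e with h | h
      · exact absurd (hcz e he) h.2.1.ne'
      · exact h.2
  · rintro ⟨⟨htf, hfb, hfc⟩, hgf, hgb, hgc⟩
    refine ⟨htf, hgf, ?_, ?_⟩
    · intro e
      rcases Stmt19Aux.mem_bond_or_circ tl hd e with hb | hc
      · exact iff_of_false (fun h => h (hgb e hb)) (hfb e hb).1.ne'
      · exact iff_of_true (hgc e hc).1.ne' (hfc e hc)
    · intro e
      rcases Stmt19Aux.mem_bond_or_circ tl hd e with hb | hc
      · have h1 := hfb e hb
        have h2 := hgb e hb
        exact ⟨by rw [h2]; linarith [h1.1], by rw [h2]; linarith [h1.2]⟩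
      · have h1 := hgc e hc
        have h2 := hfc e hc
        exact ⟨by rw [h2]; linarith [h1.1], by rw [h2]; linarith [h1.2]⟩
end
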